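/- For every deterministic parity pushdown automaton A there is a deterministic stair parity pushdown automaton A' recognizing the same ω-language, L(A)=L(A'); consequently DCFL_ω ⊆ StDCFL_ω. -/

import Mathlib

/-!  Common definitions: pushdown machines, ω-pushdown automata, pushdown games,
pushdown strategies (deterministic pushdown automata with output), and
alternating two-way / nondeterministic one-way parity tree automata. -/

/-- Kinds of letters in a visibly pushdown alphabet. -/
inductive VKind : Type
  | call | ret | intern

/-- A pushdown machine over states `Q`, input alphabet `A` and stack alphabet `Γ`.
The initial stack symbol `⊥` is implicit: a stack content `γ⊥ ∈ Γ*⊥` is modeled by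
the list `γ` of symbols above `⊥`, and the top-of-stack argument `none` of the
transition function represents `⊥` (i.e. the empty list).  A transition replaces the
topmost symbol by the returned word (respectively pushes the returned word on top of
`⊥`), so `⊥` can neither be pushed onto nor removed from the stack.  The input
letter `none` is `ε`. -/
structure PDM (Q A Γ : Type) where
  δ : Q → Option A → Option Γ → Set (Q × List Γ)
  qin : Q

namespace PDM

variable {Q A Γ : Type}

/-- A configuration: a state together with the stack content (above `⊥`). -/
abbrev Conf (Q Γ : Type) : Type := Q × List Γ

/-- Stack height of a configuration `(q,γ⊥)`: the length `|γ⊥|` (the `⊥` counts). -/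
def sh (c : Conf Q Γ) : ℕ := c.2.length + 1

/-- One transition step of the machine, labeled by `none` (an `ε`-move) or `some a`. -/
def Step (M : PDM Q A Γ) (c : Conf Q Γ) (a : Option A) (c' : Conf Q Γ) : Prop :=
  match c.2 with
  | [] => c' ∈ M.δ c.1 a none
  | t :: rest => ∃ γ' : List Γ, (c'.1, γ') ∈ M.δ c.1 a (some t) ∧ c'.2 = γ' ++ rest

/-- Determinism: `|δ(q,a,A)| + |δ(q,ε,A)| ≤ 1` for all `q ∈ Q`, `a ∈ A`, `A ∈ Γ⊥`. -/
def Deterministic (M : PDM Q A Γ) : Prop :=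
  ∀ (q : Q) (t : Option Γ),
    (∀ a : Option A, (M.δ q a t).Subsingleton) ∧
    (∀ a : A, (M.δ q (some a) t).Nonempty → M.δ q none t = ∅)

/-- A realtime machine has no `ε`-transitions. -/
def Realtime (M : PDM Q A Γ) : Prop := ∀ q t, M.δ q none t = ∅

/-- Normal form: every transition is a push of exactly one symbol (`δ(q,a,A)=(q',A'A)`),
a skip (`δ(q,a,A)=(q',A)`), or a pop (`δ(q,a,A)=(q',ε)`). -/
def NormalForm (M : PDM Q A Γ) : Prop :=
  ∀ q a t p, p ∈ M.δ q a t →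
    p.2 = ([] : List Γ) ∨ p.2 = t.toList ∨ ∃ B : Γ, p.2 = B :: t.toList

/-- A blind one-counter machine: every transition enabled with empty stack (counter `0`)
is also enabled, with the same state change and counter effect, with nonempty stack:
`δ(q,a,⊥) ∋ (q',Aⁿ⊥)` implies `δ(q,a,A) ∋ (q',AⁿA)`. -/
def Blind (M : PDM Q A Unit) : Prop :=
  ∀ (q : Q) (a : Option A) (p : Q × List Unit),
    p ∈ M.δ q a none → (p.1, p.2 ++ [()]) ∈ M.δ q a (some ())

/-- A visibly pushdown machine w.r.t. the partition `kind` of the input alphabet into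
calls, returns and internal actions: no `ε`-transitions; on a call exactly one symbol is
pushed and the transition does not depend on the top of the stack; on a return the top
symbol is popped (`⊥` is left unchanged); on an internal action the stack is unchanged
and the transition does not depend on the top of the stack. -/
def Visibly (M : PDM Q A Γ) (kind : A → VKind) : Prop :=
  (∀ q t, M.δ q none t = ∅) ∧
  (∀ q a, kind a = VKind.call → ∃ mv : Set (Q × Γ),
      ∀ t, M.δ q (some a) t = (fun p : Q × Γ => (p.1, p.2 :: t.toList)) '' mv) ∧
  (∀ q a t, kind a = VKind.ret → ∀ p ∈ M.δ q (some a) t, p.2 = ([] : List Γ)) ∧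
  (∀ q a, kind a = VKind.intern → ∃ mv : Set Q,
      ∀ t, M.δ q (some a) t = (fun q' : Q => (q', t.toList)) '' mv)

/-- `ρ` is an infinite run of `M` on the ω-word `α`: it starts in the initial
configuration `(q_in,⊥)`, each step follows `δ` on a letter or on `ε`, and the
consumed letters (the non-`ε` labels, in order) form exactly `α`. -/
def IsRunOn (M : PDM Q A Γ) (ρ : ℕ → Conf Q Γ) (α : ℕ → A) : Prop :=
  ρ 0 = (M.qin, []) ∧
  ∃ u : ℕ → Option A,
    (∀ n : ℕ, M.Step (ρ n) (u n) (ρ (n + 1))) ∧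
    ∃ φ : ℕ → ℕ, StrictMono φ ∧ (∀ k : ℕ, u (φ k) = some (α k)) ∧
      ∀ n : ℕ, (u n).isSome = true → ∃ k : ℕ, φ k = n

/-- `Inf(ρ)`: states occurring infinitely often in `ρ`. -/
def InfOcc (ρ : ℕ → Conf Q Γ) : Set Q := {q | ∀ n : ℕ, ∃ m, n ≤ m ∧ (ρ m).1 = q}

/-- `Steps_ρ = {n | ∀ m ≥ n, sh(ρ(m)) ≥ sh(ρ(n))}`. -/
def StepsSet (ρ : ℕ → Conf Q Γ) : Set ℕ := {n | ∀ m : ℕ, n ≤ m → sh (ρ n) ≤ sh (ρ m)}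

/-- States occurring infinitely often in the subsequence `ρ|_{Steps_ρ}`. -/
def InfOccStair (ρ : ℕ → Conf Q Γ) : Set Q :=
  {q | ∀ n : ℕ, ∃ m, n ≤ m ∧ m ∈ StepsSet ρ ∧ (ρ m).1 = q}

/-- Parity condition: the minimal priority seen infinitely often is even. -/
def ParityAcc (col : Q → ℕ) (ρ : ℕ → Conf Q Γ) : Prop :=
  Even (sInf (col '' InfOcc ρ))

/-- Stair parity condition: the minimal priority seen infinitely often in
`ρ|_{Steps_ρ}` is even. -/
def StairParityAcc (col : Q → ℕ) (ρ : ℕ → Conf Q Γ) : Prop :=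
  Even (sInf (col '' InfOccStair ρ))

/-- The ω-language of the parity pushdown automaton `(M, col)`. -/
def ParityLang (M : PDM Q A Γ) (col : Q → ℕ) : Set (ℕ → A) :=
  {α | ∃ ρ : ℕ → Conf Q Γ, M.IsRunOn ρ α ∧ ParityAcc col ρ}

/-- The ω-language of the stair parity pushdown automaton `(M, col)`. -/
def StairParityLang (M : PDM Q A Γ) (col : Q → ℕ) : Set (ℕ → A) :=
  {α | ∃ ρ : ℕ → Conf Q Γ, M.IsRunOn ρ α ∧ StairParityAcc col ρ}

/-- Acceptance of a finite word by the pushdown automaton `(M, F)`: some finite run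
from the initial configuration consuming exactly `w` ends in a final state. -/
def AcceptsFin (M : PDM Q A Γ) (F : Set Q) (w : List A) : Prop :=
  ∃ (m : ℕ) (ρ : ℕ → Conf Q Γ) (u : ℕ → Option A),
    ρ 0 = (M.qin, []) ∧ (∀ k < m, M.Step (ρ k) (u k) (ρ (k + 1))) ∧
    (List.ofFn (fun k : Fin m => u k.1)).reduceOption = w ∧ (ρ m).1 ∈ F

/-- An infinite play of the pushdown game: a sequence of configurations starting in the
initial configuration, together with the labels of the chosen transitions. -/
def IsPlay (M : PDM Q A Γ) (conf : ℕ → Conf Q Γ) (lab : ℕ → Option A) : Prop :=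
  conf 0 = (M.qin, []) ∧ ∀ n : ℕ, M.Step (conf n) (lab n) (conf (n + 1))

/-- Player `i` has a winning strategy (as an abstract function from histories of moves
to moves) in the pushdown game on `M` given by the partition `owner` of the states,
where Player 0 wins an infinite play `conf` iff `W conf` holds: the strategy always
proposes an enabled transition at any reachable consistent position owned by Player `i`,
and every infinite play consistent with it is won by Player `i`. -/
def HasAbstractWinning (M : PDM Q A Γ) (owner : Q → Fin 2)
    (W : (ℕ → Conf Q Γ) → Prop) (i : Fin 2) : Prop :=
  ∃ σ : List (Option A) → Option A,
    (∀ (n : ℕ) (conf : ℕ → Conf Q Γ) (lab : ℕ → Option A),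
      conf 0 = (M.qin, []) →
      (∀ k < n, M.Step (conf k) (lab k) (conf (k + 1))) →
      (∀ k < n, owner (conf k).1 = i → lab k = σ (List.ofFn (fun j : Fin k => lab j.1))) →
      owner (conf n).1 = i →
      ∃ c' : Conf Q Γ, M.Step (conf n) (σ (List.ofFn (fun j : Fin n => lab j.1))) c') ∧
    (∀ (conf : ℕ → Conf Q Γ) (lab : ℕ → Option A),
      IsPlay M conf lab →
      (∀ n : ℕ, owner (conf n).1 = i → lab n = σ (List.ofFn (fun j : Fin n => lab j.1))) →
      (W conf ↔ i = 0))

/-- The pushdown game on `M` with partition `owner` and winning condition `W`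
(for Player 0) is determined. -/
def Determined (M : PDM Q A Γ) (owner : Q → Fin 2)
    (W : (ℕ → Conf Q Γ) → Prop) : Prop :=
  ∃ i : Fin 2, HasAbstractWinning M owner W i

end PDM

/-- A deterministic pushdown automaton with output (a pushdown strategy): it reads the
opponent's moves and outputs the player's own next choices.  `δ s inp t = some (s', γ', out)`
means: in state `s` with top of stack `t` (`none` = `⊥`), on input `inp` (`none` = `ε`)
the machine moves to state `s'`, replaces the top of the stack by `γ'` and outputs `out`
(`none` = `ε`-output).  Partiality of `δ` gives determinism per input letter. -/
structure StratPDA (A Γ' : Type) where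
  S : Type
  sin : S
  δ : S → Option A → Option Γ' → Option (S × List Γ' × Option A)

namespace StratPDA

variable {Q A Γ Γ' : Type}

/-- Determinism: if an `ε`-input transition is present then no letter transition is. -/
def Det (T : StratPDA A Γ') : Prop :=
  ∀ (s : T.S) (t : Option Γ'),
    (T.δ s none t).isSome = true → ∀ a : A, T.δ s (some a) t = none

/-- One step of the strategy transducer (same stack convention as for `PDM`). -/
def TStep (T : StratPDA A Γ') (c : T.S × List Γ') (inp out : Option A)
    (c' : T.S × List Γ') : Prop :=
  match c.2 with
  | [] => T.δ c.1 inp none = some (c'.1, c'.2, out)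
  | t :: rest => ∃ γ' : List Γ',
      T.δ c.1 inp (some t) = some (c'.1, γ', out) ∧ c'.2 = γ' ++ rest

/-- A blind one-counter strategy transducer: every transition enabled with counter `0`
is also enabled, with the same effect, with nonzero counter. -/
def Blind (T : StratPDA A Unit) : Prop :=
  ∀ (s : T.S) (inp : Option A) (r : T.S × List Unit × Option A),
    T.δ s inp none = some r → T.δ s inp (some ()) = some (r.1, r.2.1 ++ [()], r.2.2)

/-- A realtime strategy transducer: no transition both reads `ε` and outputs `ε`
(every transition carries a letter, either read or written). -/
def Realtime (T : StratPDA A Γ') : Prop :=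
  ∀ (s : T.S) (t : Option Γ') (r : T.S × List Γ' × Option A),
    T.δ s none t = some r → r.2.2 ≠ none

/-- Stack discipline of a visibly pushdown machine for the letter `a`. -/
def VStk (kind : A → VKind) (a : A) (t : Option Γ') (γ' : List Γ') : Prop :=
  match kind a with
  | VKind.call => ∃ B : Γ', γ' = B :: t.toList
  | VKind.ret => γ' = ([] : List Γ')
  | VKind.intern => γ' = t.toList

/-- A visibly pushdown strategy transducer: every transition carries exactly one letter
(the letter read on input transitions, the letter written on output transitions) and the
stack is used according to the kind of that letter. -/
def Visibly (T : StratPDA A Γ') (kind : A → VKind) : Prop :=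
  (∀ (s : T.S) (a : A) (t : Option Γ') (s' : T.S) (γ' : List Γ') (out : Option A),
      T.δ s (some a) t = some (s', γ', out) → out = none ∧ VStk kind a t γ') ∧
  (∀ (s : T.S) (t : Option Γ') (s' : T.S) (γ' : List Γ') (out : Option A),
      T.δ s none t = some (s', γ', out) → ∃ a : A, out = some a ∧ VStk kind a t γ')

/-- The strategy transducer `T`, playing for Player `i`, is consistent with the play
`(conf, lab)` of the pushdown game on `M`: `T` runs in lockstep with the play, reading
the opponent's moves and outputting Player `i`'s moves. -/
def Consistent (T : StratPDA A Γ') (M : PDM Q A Γ) (owner : Q → Fin 2) (i : Fin 2)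
    (conf : ℕ → PDM.Conf Q Γ) (lab : ℕ → Option A)
    (τ : ℕ → T.S × List Γ') : Prop :=
  τ 0 = (T.sin, []) ∧
  ∀ n : ℕ, T.TStep (τ n) (if owner (conf n).1 = i then none else lab n)
      (if owner (conf n).1 = i then lab n else none) (τ (n + 1))

/-- `T` realizes a winning strategy for Player `i` in the pushdown game on `M` with
partition `owner`, where Player 0 wins an infinite play `conf` iff `W conf` holds:
`T` is deterministic; along every finite `T`-consistent play prefix `T` proposes an
enabled move at positions of Player `i` and can process every enabled move of the
opponent; and every infinite play consistent with `T` is won by Player `i`. -/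
def IsWinningStrat (T : StratPDA A Γ') (M : PDM Q A Γ) (owner : Q → Fin 2)
    (W : (ℕ → PDM.Conf Q Γ) → Prop) (i : Fin 2) : Prop :=
  T.Det ∧
  (∀ (n : ℕ) (conf : ℕ → PDM.Conf Q Γ) (lab : ℕ → Option A) (τ : ℕ → T.S × List Γ'),
    conf 0 = (M.qin, []) → τ 0 = (T.sin, []) →
    (∀ k < n, M.Step (conf k) (lab k) (conf (k + 1))) →
    (∀ k < n, T.TStep (τ k) (if owner (conf k).1 = i then none else lab k)
        (if owner (conf k).1 = i then lab k else none) (τ (k + 1))) →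
    ((owner (conf n).1 = i →
        ∃ (x : Option A) (c' : PDM.Conf Q Γ) (τ' : T.S × List Γ'),
          M.Step (conf n) x c' ∧ T.TStep (τ n) none x τ') ∧
     (owner (conf n).1 ≠ i →
        ∀ (x : Option A) (c' : PDM.Conf Q Γ), M.Step (conf n) x c' →
          ∃ τ' : T.S × List Γ', T.TStep (τ n) x none τ'))) ∧
  (∀ (conf : ℕ → PDM.Conf Q Γ) (lab : ℕ → Option A) (τ : ℕ → T.S × List Γ'),
    PDM.IsPlay M conf lab → T.Consistent M owner i conf lab τ → (W conf ↔ i = 0))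

end StratPDA

/-! Tree automata. -/

/-- Positive Boolean formulas over `X` (with `true` and `false`). -/
inductive PosBool (X : Type) : Type
  | tru | fls
  | var (x : X)
  | and (f g : PosBool X)
  | or (f g : PosBool X)

/-- Satisfaction of a positive Boolean formula by a set of variables. -/
def PosBool.Sat {X : Type} : PosBool X → Set X → Prop
  | .tru, _ => True
  | .fls, _ => False
  | .var x, Y => x ∈ Y
  | .and f g, Y => f.Sat Y ∧ g.Sat Y
  | .or f g, Y => f.Sat Y ∨ g.Sat Y

/-- Navigation directions in a `Γ`-tree: up (to the parent), stay, or down to child `A`.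
Nodes of the full `Γ`-tree are lists over `Γ` with the last chosen direction at the head,
so the child `γ.↓_A` is `A :: γ` and the parent of `A :: γ` is `γ`. -/
inductive TMove (Γ : Type) : Type
  | up | stay
  | down (A : Γ)

def TMove.apply {Γ : Type} : TMove Γ → List Γ → Option (List Γ)
  | .up, [] => none
  | .up, _ :: l => some l
  | .stay, l => some l
  | .down A, l => some (A :: l)

/-- An alternating two-way parity tree automaton over `Sig`-labeled full `Γ`-trees. -/
structure A2TA (Sig Γ : Type) where
  Q : Type
  qin : Q
  δ : Q → Sig → PosBool (TMove Γ × Q)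
  col : Q → ℕ

/-- A run of the A2TA `B` on the `Sig`-labeled full `Γ`-tree `lab`: a tree (over some
branching type `Ξ`, children obtained by consing) whose nodes are labeled by pairs
(state, tree node), rooted at `(q_in, ε)`, such that the successors of every node
satisfy the transition formula. -/
structure A2Run {Sig Γ : Type} (B : A2TA Sig Γ) (lab : List Γ → Sig) where
  Ξ : Type
  tree : Set (List Ξ)
  rlab : List Ξ → B.Q × List Γ
  root_mem : [] ∈ tree
  root_lab : rlab [] = (B.qin, [])
  closed : ∀ (ξ : Ξ) (l : List Ξ), ξ :: l ∈ tree → l ∈ tree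
  trans : ∀ l ∈ tree, ∃ S : Set (TMove Γ × B.Q),
    PosBool.Sat (B.δ (rlab l).1 (lab (rlab l).2)) S ∧
    ∀ dq ∈ S, ∃ γ' : List Γ, TMove.apply dq.1 (rlab l).2 = some γ' ∧
      ∃ ξ : Ξ, ξ :: l ∈ tree ∧ rlab (ξ :: l) = (dq.2, γ')

/-- An infinite path of a run, starting at the root. -/
def A2Run.IsPath {Sig Γ : Type} {B : A2TA Sig Γ} {lab : List Γ → Sig}
    (r : A2Run B lab) (π : ℕ → List r.Ξ) : Prop :=
  π 0 = [] ∧ ∀ n : ℕ, (∃ ξ : r.Ξ, π (n + 1) = ξ :: π n) ∧ π (n + 1) ∈ r.tree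

/-- `B` accepts `lab`: some run is accepting, i.e. on every infinite path the minimal
priority seen infinitely often is even. -/
def A2TA.Accepts {Sig Γ : Type} (B : A2TA Sig Γ) (lab : List Γ → Sig) : Prop :=
  ∃ r : A2Run B lab, ∀ π : ℕ → List r.Ξ, r.IsPath π →
    Even (sInf (B.col '' {q | ∀ n : ℕ, ∃ m, n ≤ m ∧ (r.rlab (π m)).1 = q}))

/-- Stair acceptance for an automaton with the same components (a StA2TA): on every
infinite path the minimal priority seen infinitely often at the `Steps` positions
(positions whose stack/tree-node height is never exceeded from below later) is even. -/
def A2TA.StairAccepts {Sig Γ : Type} (B : A2TA Sig Γ) (lab : List Γ → Sig) : Prop :=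
  ∃ r : A2Run B lab, ∀ π : ℕ → List r.Ξ, r.IsPath π →
    Even (sInf (B.col '' {q | ∀ n : ℕ, ∃ m, n ≤ m ∧
      (∀ m' : ℕ, m ≤ m' → (r.rlab (π m)).2.length ≤ (r.rlab (π m')).2.length) ∧
      (r.rlab (π m)).1 = q}))

/-- A nondeterministic one-way parity tree automaton over `Sig`-labeled full `Γ`-trees. -/
structure N1TA (Sig Γ : Type) where
  Q : Type
  qin : Q
  Δ : Q → Sig → Set (Γ → Q)
  col : Q → ℕ

/-- Acceptance for N1TA: some run (one state per node, top-down) is such that along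
every branch the minimal priority seen infinitely often is even. -/
def N1TA.Accepts {Sig Γ : Type} (E : N1TA Sig Γ) (lab : List Γ → Sig) : Prop :=
  ∃ r : List Γ → E.Q, r [] = E.qin ∧
    (∀ l : List Γ, ∃ f ∈ E.Δ (r l) (lab l), ∀ A : Γ, r (A :: l) = f A) ∧
    ∀ β : ℕ → Γ, Even (sInf (E.col ''
      {q | ∀ n : ℕ, ∃ m, n ≤ m ∧ r (List.ofFn (fun j : Fin m => β j.1)).reverse = q}))


/-- `L ∈ DCFL_ω`: `L` is the ω-language of some deterministic parity pushdown automaton. -/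
def InDCFLomega {A : Type} (L : Set (ℕ → A)) : Prop :=
  ∃ (Q Γ : Type) (_ : Finite Q) (_ : Finite Γ) (M : PDM Q A Γ) (col : Q → ℕ),
    M.Deterministic ∧ PDM.ParityLang M col = L

/-- `L ∈ StDCFL_ω`: `L` is the ω-language of some deterministic stair parity pushdown
automaton. -/
def InStDCFLomega {A : Type} (L : Set (ℕ → A)) : Prop :=
  ∃ (Q Γ : Type) (_ : Finite Q) (_ : Finite Γ) (M : PDM Q A Γ) (col : Q → ℕ),
    M.Deterministic ∧ PDM.StairParityLang M col = L

/-- `L ∈ VPL_ω` (w.r.t. the visibly pushdown alphabet given by `kind`): `L` is the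
ω-language of some (nondeterministic) parity visibly pushdown automaton. -/
def InVPLomega {A : Type} (kind : A → VKind) (L : Set (ℕ → A)) : Prop :=
  ∃ (Q Γ : Type) (_ : Finite Q) (_ : Finite Γ) (M : PDM Q A Γ) (col : Q → ℕ),
    M.Visibly kind ∧ PDM.ParityLang M col = L

namespace StairH

/-- Minimum of `f` over the interval `[a,b]`. -/
noncomputable def cmin (f : ℕ → ℕ) (a b : ℕ) : ℕ := sInf {x | ∃ k, a ≤ k ∧ k ≤ b ∧ f k = x}

lemma cmin_mem {f : ℕ → ℕ} {a b : ℕ} (h : a ≤ b) :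
    ∃ k, a ≤ k ∧ k ≤ b ∧ f k = cmin f a b := by
  have : cmin f a b ∈ {x | ∃ k, a ≤ k ∧ k ≤ b ∧ f k = x} :=
    Nat.sInf_mem ⟨f a, ⟨a, le_refl a, h, rfl⟩⟩
  exact this

lemma cmin_le {f : ℕ → ℕ} {a b k : ℕ} (h1 : a ≤ k) (h2 : k ≤ b) : cmin f a b ≤ f k :=
  Nat.sInf_le ⟨k, h1, h2, rfl⟩

lemma cmin_self (f : ℕ → ℕ) (a : ℕ) : cmin f a a = f a := by
  obtain ⟨k, h1, h2, h3⟩ := cmin_mem (f := f) (le_refl a)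
  have : k = a := le_antisymm h2 h1
  subst this
  exact h3.symm

lemma cmin_succ {f : ℕ → ℕ} {a b : ℕ} (h : a ≤ b) :
    cmin f a (b + 1) = min (cmin f a b) (f (b + 1)) := by
  apply le_antisymm
  · apply le_min
    · obtain ⟨k, h1, h2, h3⟩ := cmin_mem (f := f) h
      calc cmin f a (b+1) ≤ f k := cmin_le h1 (by omega)
        _ = cmin f a b := h3
    · exact cmin_le (by omega) (le_refl _)
  · obtain ⟨k, h1, h2, h3⟩ := cmin_mem (f := f) (show a ≤ b + 1 by omega)
    rcases Nat.lt_or_ge k (b+1) with hk | hk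
    · calc min (cmin f a b) (f (b+1)) ≤ cmin f a b := min_le_left _ _
        _ ≤ f k := cmin_le h1 (by omega)
        _ = _ := h3
    · have : k = b + 1 := by omega
      subst this
      calc min (cmin f a b) (f (b+1)) ≤ f (b+1) := min_le_right _ _
        _ = _ := h3

/-- The "era" of height `h` at time `n`: the least `m` such that the height stays
`≥ h` on `[m,n]`. -/
noncomputable def er (len : ℕ → ℕ) (n h : ℕ) : ℕ := sInf {m | ∀ k, m ≤ k → k ≤ n → h ≤ len k}

lemma er_nonempty (len : ℕ → ℕ) (n h : ℕ) :
    {m | ∀ k, m ≤ k → k ≤ n → h ≤ len k}.Nonempty :=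
  ⟨n + 1, fun k h1 h2 => by omega⟩

lemma er_spec (len : ℕ → ℕ) (n h : ℕ) :
    ∀ k, er len n h ≤ k → k ≤ n → h ≤ len k :=
  Nat.sInf_mem (er_nonempty len n h)

lemma er_le {len : ℕ → ℕ} {n h m : ℕ} (hm : ∀ k, m ≤ k → k ≤ n → h ≤ len k) :
    er len n h ≤ m := Nat.sInf_le hm

lemma er_le_self {len : ℕ → ℕ} {n h : ℕ} (hh : h ≤ len n) : er len n h ≤ n :=
  er_le (fun k h1 h2 => by have : k = n := le_antisymm h2 h1; exact this ▸ hh)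

lemma er_zero (len : ℕ → ℕ) (n : ℕ) : er len n 0 = 0 :=
  Nat.le_zero.mp (er_le (fun _ _ _ => Nat.zero_le _))

lemma er_stable {len : ℕ → ℕ} {n h : ℕ} (hh : h ≤ len (n + 1)) :
    er len (n + 1) h = er len n h := by
  unfold er
  congr 1
  ext m
  constructor
  · intro hm k h1 h2
    exact hm k h1 (by omega)
  · intro hm k h1 h2
    rcases Nat.lt_or_ge k (n + 1) with h3 | h3
    · exact hm k h1 (by omega)
    · have : k = n + 1 := by omega
      exact this ▸ hh

lemma er_new {len : ℕ → ℕ} {n h : ℕ} (hlt : len n < h) (hle : h ≤ len (n + 1)) :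
    er len (n + 1) h = n + 1 := by
  apply le_antisymm
  · refine er_le (fun k h1 h2 => ?_)
    have hk : k = n + 1 := by omega
    rw [hk]; exact hle
  · by_contra hc
    push_neg at hc
    have := er_spec len (n + 1) h n (by omega) (by omega)
    omega

/-- Every `ℕ`-valued sequence has cofinally many "step" positions. -/
lemma steps_cofinal (len : ℕ → ℕ) (N : ℕ) :
    ∃ n, N ≤ n ∧ ∀ m, n ≤ m → len n ≤ len m := by
  have hne : {x | ∃ m, N ≤ m ∧ len m = x}.Nonempty := ⟨len N, N, le_rfl, rfl⟩
  obtain ⟨m0, hm0N, hm0⟩ := Nat.sInf_mem hne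
  exact ⟨m0, hm0N, fun m hm => by
    rw [hm0]
    exact Nat.sInf_le ⟨m, hm0N.trans hm, rfl⟩⟩

/-- Pigeonhole for cofinal occurrences over a finite index type. -/
lemma pig {ι : Type} [Finite ι] (P : ι → ℕ → Prop)
    (h : ∀ N, ∃ n, N ≤ n ∧ ∃ i, P i n) : ∃ i, ∀ N, ∃ n, N ≤ n ∧ P i n := by
  by_contra hc
  push_neg at hc
  choose Nf hNf using hc
  cases nonempty_fintype ι
  obtain ⟨n, hn, i, hP⟩ := h (Finset.univ.sup Nf)
  exact hNf i n ((Finset.le_sup (Finset.mem_univ i)).trans hn) hP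

/-- The key combinatorial lemma: the minimal value occurring cofinally in `f`
coincides with the minimal value occurring cofinally among the interval-minima `g`
taken at the positions of `T`. -/
lemma comb (f : ℕ → ℕ) (B : ℕ) (hbd : ∀ n, f n ≤ B) (T : Set ℕ)
    (hTcof : ∀ N, ∃ n, N ≤ n ∧ n ∈ T) (g : ℕ → ℕ)
    (hg : ∀ n ∈ T, ∃ a, a ≤ n ∧ g n = cmin f a n ∧
      (∀ k, a ≤ k → k < n → k ∉ T) ∧ (a = 0 ∨ a - 1 ∈ T)) :
    sInf {z | ∀ N, ∃ n, N ≤ n ∧ n ∈ T ∧ g n = z} = sInf {y | ∀ N, ∃ n, N ≤ n ∧ f n = y} := by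
  set Y := {y | ∀ N, ∃ n, N ≤ n ∧ f n = y} with hY
  have hYne : Y.Nonempty := by
    obtain ⟨i, hi⟩ := pig (ι := Fin (B + 1)) (fun i n => f n = i.1)
      (fun N => ⟨N, le_rfl, ⟨f N, by have := hbd N; omega⟩, rfl⟩)
    exact ⟨i.1, hi⟩
  set L := sInf Y with hL
  have hLY : L ∈ Y := Nat.sInf_mem hYne
  -- beyond some point all values of f are ≥ L
  have hN : ∃ N, ∀ n, N ≤ n → L ≤ f n := by
    have h1 : ∀ y : Fin L, ∃ Ny, ∀ n, Ny ≤ n → f n ≠ y.1 := by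
      intro y
      have : (y : ℕ) ∉ Y := Nat.notMem_of_lt_sInf y.2
      rw [hY, Set.mem_setOf_eq] at this
      push_neg at this
      obtain ⟨N, hNy⟩ := this
      exact ⟨N, fun n hn => (hNy n hn)⟩
    choose Nf hNf using h1
    cases nonempty_fintype (Fin L)
    refine ⟨Finset.univ.sup Nf, fun n hn => ?_⟩
    by_contra hcon
    push_neg at hcon
    exact hNf ⟨f n, hcon⟩ n ((Finset.le_sup (Finset.mem_univ _)).trans hn) rfl
  obtain ⟨N, hNval⟩ := hN
  obtain ⟨t, htN, htT⟩ := hTcof N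
  -- beyond t, all g-values at T-positions are ≥ L
  have key : ∀ n ∈ T, t < n → L ≤ g n := by
    intro n hn hlt
    obtain ⟨a, ha, hga, hnoT, _⟩ := hg n hn
    have haN : N ≤ a := by
      by_contra hcon
      push_neg at hcon
      rcases Nat.lt_or_ge t a with h1 | h1
      · omega
      · exact hnoT t h1 hlt htT
    obtain ⟨k, hk1, hk2, hk3⟩ := cmin_mem (f := f) ha
    rw [hga, ← hk3]
    exact hNval k (by omega)
  -- L is attained cofinally among the g-values at T-positions
  have hLZ : L ∈ {z | ∀ N', ∃ n, N' ≤ n ∧ n ∈ T ∧ g n = z} := by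
    intro M
    obtain ⟨m, hm, hfm⟩ := hLY (max (max M N) (t + 1))
    have hmM : M ≤ m := le_trans (le_trans (le_max_left _ _) (le_max_left _ _)) hm
    have hmt : t + 1 ≤ m := le_trans (le_max_right _ _) hm
    have hTm : {x | m ≤ x ∧ x ∈ T}.Nonempty := by
      obtain ⟨n, hn1, hn2⟩ := hTcof m; exact ⟨n, hn1, hn2⟩
    obtain ⟨hmn, hnT⟩ := Nat.sInf_mem hTm
    set n := sInf {x | m ≤ x ∧ x ∈ T} with hn
    obtain ⟨a, ha, hga, hnoT, hpred⟩ := hg n hnT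
    have ham : a ≤ m := by
      rcases hpred with h0 | hpT
      · omega
      · by_contra hcon
        push_neg at hcon
        have : n ≤ a - 1 := Nat.sInf_le ⟨by omega, hpT⟩
        omega
    have h1 : g n ≤ L := by
      rw [hga, ← hfm]
      exact cmin_le ham hmn
    have h2 : L ≤ g n := key n hnT (by omega)
    exact ⟨n, by omega, hnT, by omega⟩
  apply le_antisymm
  · exact Nat.sInf_le hLZ
  · refine le_csInf ⟨L, hLZ⟩ ?_
    intro z hz
    obtain ⟨n, hn1, hn2, hn3⟩ := hz (t + 1)
    rw [← hn3]
    exact key n hn2 (by omega)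

end StairH

namespace StairC

open PDM StairH

variable {Q A Γ : Type} (M : PDM Q A Γ) (col : Q → ℕ)

/-- The (finite, for finite `Q`) type of colors used by `col`. -/
def CT := {n : ℕ // ∃ q, col q = n}

def colC (q : Q) : CT col := ⟨col q, q, rfl⟩

def minC (a b : CT col) : CT col :=
  ⟨min a.1 b.1, by
    rcases le_total a.1 b.1 with h | h
    · rw [min_eq_left h]; exact a.2
    · rw [min_eq_right h]; exact b.2⟩

def optMin (o : Option (CT col)) (x : CT col) : CT col := o.elim x (fun e => minC col e x)

@[simp] lemma minC_val (a b : CT col) : (minC col a b).1 = min a.1 b.1 := rfl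

@[simp] lemma optMin_none (x : CT col) : optMin col none x = x := rfl

@[simp] lemma optMin_some (e x : CT col) : optMin col (some e) x = minC col e x := rfl

lemma optMin_val_shift (o : Option (CT col)) (y z : CT col) (F : ℕ)
    (hz : z.1 = min y.1 F) : (optMin col o z).1 = min (optMin col o y).1 F := by
  cases o with
  | none => simpa using hz
  | some e => simp [optMin, minC, Option.elim, hz, min_assoc]

abbrev Q2 := Q × CT col × CT col
abbrev G2 := Γ × Option (CT col)

def col2 : Q2 (Q := Q) col → ℕ := fun p => p.2.2.1

/-- Annotation value at position `i` (from the top) of a freshly pushed word of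
length `k`.  `te` is the annotation of the replaced top symbol (`none` if the push
happens on the empty stack), `cc` the current running minimum. -/
def aval (k : ℕ) (te : Option (Option (CT col))) (cc : CT col) (i : ℕ) : Option (CT col) :=
  if i + 1 = k then te.getD (some cc)
  else if i + 2 = k ∧ te.isSome then some cc else none

def annot (w : List Γ) (te : Option (Option (CT col))) (cc : CT col) : List (G2 (Γ := Γ) col) :=
  List.ofFn (fun i : Fin w.length => (w.get i, aval col w.length te cc i.1))

@[simp] lemma annot_length (w : List Γ) (te : Option (Option (CT col))) (cc : CT col) :
    (annot col w te cc).length = w.length := by simp [annot]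

lemma annot_map_fst (w : List Γ) (te : Option (Option (CT col))) (cc : CT col) :
    (annot col w te cc).map Prod.fst = w := by
  simp only [annot, List.map_ofFn]
  exact List.ofFn_get w

lemma annot_getElem? (w : List Γ) (te : Option (Option (CT col))) (cc : CT col)
    {i : ℕ} (hi : i < w.length) :
    (annot col w te cc)[i]? = some (w.get ⟨i, hi⟩, aval col w.length te cc i) := by
  simp [annot, List.getElem?_ofFn, List.ofFnNthVal, hi]

lemma annot_ann (w : List Γ) (te : Option (Option (CT col))) (cc : CT col)
    {i : ℕ} (hi : i < w.length) :
    (Option.map Prod.snd ((annot col w te cc)[i]?)).join = aval col w.length te cc i := by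
  rw [annot_getElem? col _ _ _ hi]
  rfl

/-- The transition lifting: given the source annotated state, the annotated top of
stack and the chosen transition `(q', w)` of `M`, produce the annotated transition
of the stair machine. -/
def liftPair (s : Q2 (Q := Q) col) (t : Option (G2 (Γ := Γ) col)) (qw : Q × List Γ) :
    Q2 (Q := Q) col × List (G2 (Γ := Γ) col) :=
  match t, qw.2 with
  | none, [] =>
      ((qw.1, minC col s.2.1 (colC col qw.1), colC col qw.1), [])
  | none, B :: w =>
      ((qw.1, colC col qw.1, colC col qw.1), annot col (B :: w) none s.2.1)
  | some e, [] =>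
      ((qw.1, optMin col e.2 (minC col s.2.1 (colC col qw.1)),
        minC col s.2.1 (colC col qw.1)), [])
  | some e, [B] =>
      ((qw.1, minC col s.2.1 (colC col qw.1), colC col qw.1), [(B, e.2)])
  | some e, B :: B' :: w =>
      ((qw.1, colC col qw.1, colC col qw.1), annot col (B :: B' :: w) (some e.2) s.2.1)

lemma liftPair_fst (s : Q2 (Q := Q) col) (t : Option (G2 (Γ := Γ) col)) (qw : Q × List Γ) :
    (liftPair col s t qw).1.1 = qw.1 := by
  obtain ⟨q', w⟩ := qw
  rcases t with _ | e <;> rcases w with _ | ⟨B, _ | ⟨B', w⟩⟩ <;> rfl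

lemma liftPair_map_fst (s : Q2 (Q := Q) col) (t : Option (G2 (Γ := Γ) col)) (qw : Q × List Γ) :
    (liftPair col s t qw).2.map Prod.fst = qw.2 := by
  obtain ⟨q', w⟩ := qw
  rcases t with _ | e <;> rcases w with _ | ⟨B, _ | ⟨B', w⟩⟩ <;>
    simp [liftPair, annot_map_fst]

/-- The stair machine. -/
def M2 : PDM (Q2 (Q := Q) col) A (G2 (Γ := Γ) col) where
  δ := fun s a t => {p | ∃ qw ∈ M.δ s.1 a (t.map Prod.fst), p = liftPair col s t qw}
  qin := (M.qin, colC col M.qin, colC col M.qin)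

lemma M2_det (hdet : M.Deterministic) : (M2 M col).Deterministic := by
  intro s t
  constructor
  · intro a p1 hp1 p2 hp2
    obtain ⟨qw1, hqw1, rfl⟩ := hp1
    obtain ⟨qw2, hqw2, rfl⟩ := hp2
    rw [(hdet s.1 (t.map Prod.fst)).1 a hqw1 hqw2]
  · intro a hne
    obtain ⟨p, qw, hqw, _⟩ := hne
    have hempty := (hdet s.1 (t.map Prod.fst)).2 a ⟨qw, hqw⟩
    ext p'
    simp only [Set.mem_empty_iff_false, iff_false]
    rintro ⟨qw', hqw', _⟩
    rw [hempty] at hqw'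
    exact hqw'

end StairC
namespace StairC

open PDM StairH

variable {Q A Γ : Type} (M : PDM Q A Γ) (col : Q → ℕ)

lemma step_nil {M' : PDM Q A Γ} {c c' : Conf Q Γ} {a : Option A}
    (hc : c.2 = []) (h : M'.Step c a c') : c' ∈ M'.δ c.1 a none := by
  obtain ⟨q, stk⟩ := c
  simp only at hc
  subst hc
  exact h

lemma step_cons {M' : PDM Q A Γ} {c c' : Conf Q Γ} {a : Option A} {t : Γ} {rest : List Γ}
    (hc : c.2 = t :: rest) (h : M'.Step c a c') :
    ∃ γ', (c'.1, γ') ∈ M'.δ c.1 a (some t) ∧ c'.2 = γ' ++ rest := by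
  obtain ⟨q, stk⟩ := c
  simp only at hc
  subst hc
  exact h

lemma step_nil_intro {M' : PDM Q A Γ} {c c' : Conf Q Γ} {a : Option A}
    (hc : c.2 = []) (h : c' ∈ M'.δ c.1 a none) : M'.Step c a c' := by
  obtain ⟨q, stk⟩ := c
  simp only at hc
  subst hc
  exact h

lemma step_cons_intro {M' : PDM Q A Γ} {c c' : Conf Q Γ} {a : Option A} {t : Γ} {rest : List Γ}
    (hc : c.2 = t :: rest) (h : ∃ γ', (c'.1, γ') ∈ M'.δ c.1 a (some t) ∧ c'.2 = γ' ++ rest) :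
    M'.Step c a c' := by
  obtain ⟨q, stk⟩ := c
  simp only at hc
  subst hc
  exact h

/-- Projection of a configuration of the stair machine. -/
def projC (d : Conf (Q2 (Q := Q) col) (G2 (Γ := Γ) col)) : Conf Q Γ :=
  (d.1.1, d.2.map Prod.fst)

lemma step_proj {d d' : Conf (Q2 (Q := Q) col) (G2 (Γ := Γ) col)} {a : Option A}
    (h : (M2 M col).Step d a d') : M.Step (projC col d) a (projC col d') := by
  rcases hstk : d.2 with _ | ⟨e, rest⟩
  · have hmem := step_nil hstk h
    obtain ⟨qw, hqw, hd'⟩ := hmem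
    have h1 : (projC col d').1 = qw.1 := by rw [projC, hd']; exact liftPair_fst col _ _ _
    have h2 : (projC col d').2 = qw.2 := by rw [projC, hd']; exact liftPair_map_fst col _ _ _
    apply step_nil_intro (by simp [projC, hstk])
    show ((projC col d').1, (projC col d').2) ∈ _
    rw [h1, h2]
    exact hqw
  · obtain ⟨γ2, hγ2, hd2⟩ := step_cons hstk h
    obtain ⟨qw, hqw, hlp⟩ := hγ2
    apply step_cons_intro (t := e.1) (rest := rest.map Prod.fst) (by simp [projC, hstk])
    refine ⟨γ2.map Prod.fst, ?_, ?_⟩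
    · have h1 : (projC col d').1 = qw.1 := by
        rw [projC]
        have := congrArg (fun p => p.1.1) hlp
        simpa [liftPair_fst] using this
      have h2 : γ2.map Prod.fst = qw.2 := by
        have := congrArg (fun p => p.2.map Prod.fst) hlp
        simpa [liftPair_map_fst] using this
      rw [h1, h2]
      exact hqw
    · simp [projC, hd2]

/-- One lifted step. -/
def nextConf (d : Conf (Q2 (Q := Q) col) (G2 (Γ := Γ) col)) (cn1 : Conf Q Γ) :
    Conf (Q2 (Q := Q) col) (G2 (Γ := Γ) col) :=
  match d.2 with
  | [] => liftPair col d.1 none cn1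
  | e :: rest =>
      let w := cn1.2.take (cn1.2.length - rest.length)
      let p := liftPair col d.1 (some e) (cn1.1, w)
      (p.1, p.2 ++ rest)

lemma lift_step {d : Conf (Q2 (Q := Q) col) (G2 (Γ := Γ) col)} {cn cn1 : Conf Q Γ}
    {a : Option A} (hs1 : d.1.1 = cn.1) (hs2 : d.2.map Prod.fst = cn.2)
    (h : M.Step cn a cn1) :
    (M2 M col).Step d a (nextConf col d cn1) ∧
      (nextConf col d cn1).1.1 = cn1.1 ∧ (nextConf col d cn1).2.map Prod.fst = cn1.2 := by
  rcases hstk : d.2 with _ | ⟨e, rest⟩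
  · have hcn2 : cn.2 = [] := by rw [← hs2, hstk]; rfl
    have hmem := step_nil hcn2 h
    have hnc : nextConf col d cn1 = liftPair col d.1 none cn1 := by
      rw [nextConf, hstk]
    refine ⟨?_, ?_, ?_⟩
    · apply step_nil_intro hstk
      exact ⟨(cn1.1, cn1.2), by rw [← hs1] at hmem; exact hmem, by rw [hnc]⟩
    · rw [hnc]; exact liftPair_fst col _ _ _
    · rw [hnc]; exact liftPair_map_fst col _ _ _
  · have hcn2 : cn.2 = e.1 :: rest.map Prod.fst := by rw [← hs2, hstk]; rfl
    obtain ⟨γ', hγ', hcn12⟩ := step_cons hcn2 h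
    have hlen : cn1.2.length - rest.length = γ'.length := by
      rw [hcn12]
      simp
    have hw : cn1.2.take (cn1.2.length - rest.length) = γ' := by
      rw [hlen, hcn12]
      exact List.take_left
    have hnc : nextConf col d cn1 =
        ((liftPair col d.1 (some e) (cn1.1, γ')).1,
          (liftPair col d.1 (some e) (cn1.1, γ')).2 ++ rest) := by
      rw [nextConf, hstk]
      simp only [hw]
    refine ⟨?_, ?_, ?_⟩
    · apply step_cons_intro hstk
      refine ⟨(liftPair col d.1 (some e) (cn1.1, γ')).2, ⟨(cn1.1, γ'), ?_, ?_⟩, ?_⟩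
      · rw [← hs1] at hγ'; exact hγ'
      · rw [hnc]
      · rw [hnc]
    · rw [hnc]
      simp [liftPair_fst]
    · rw [hnc]
      simp only [List.map_append, liftPair_map_fst]
      rw [hcn12]
  end StairC
namespace StairC

open PDM StairH

section Invariant

variable {Q A Γ : Type} {M : PDM Q A Γ} {col : Q → ℕ}
variable {ρ2 : ℕ → Conf (Q2 (Q := Q) col) (G2 (Γ := Γ) col)} {u : ℕ → Option A}

/-- color of the state at time `n` -/
def fC (ρ2 : ℕ → Conf (Q2 (Q := Q) col) (G2 (Γ := Γ) col)) (n : ℕ) : ℕ := col ((ρ2 n).1.1)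

/-- stack length (above `⊥`) at time `n` -/
def lenC (ρ2 : ℕ → Conf (Q2 (Q := Q) col) (G2 (Γ := Γ) col)) (n : ℕ) : ℕ := (ρ2 n).2.length

/-- annotation at position `i` (from the top) at time `n` -/
def annAt (ρ2 : ℕ → Conf (Q2 (Q := Q) col) (G2 (Γ := Γ) col)) (n i : ℕ) : Option (CT col) :=
  Option.join (((ρ2 n).2[i]?).map Prod.snd)

/-- the value of the running minimum after popping `i` symbols -/
def cSeq (ρ2 : ℕ → Conf (Q2 (Q := Q) col) (G2 (Γ := Γ) col)) (n : ℕ) : ℕ → CT col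
  | 0 => (ρ2 n).1.2.1
  | i + 1 => optMin col (annAt ρ2 n i) (cSeq ρ2 n i)

lemma cSeq_zero (n : ℕ) : cSeq ρ2 n 0 = (ρ2 n).1.2.1 := rfl

lemma cSeq_succ (n i : ℕ) : cSeq ρ2 n (i + 1) = optMin col (annAt ρ2 n i) (cSeq ρ2 n i) := rfl

variable (h0 : ρ2 0 = ((M2 M col).qin, []))
variable (hstep : ∀ n, (M2 M col).Step (ρ2 n) (u n) (ρ2 (n + 1)))

include h0 hstep

theorem inv (n : ℕ) : ∀ i ≤ lenC ρ2 n,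
    (cSeq ρ2 n i).1 = cmin (fC ρ2) (er (lenC ρ2) n (lenC ρ2 n - i)) n := by
  induction n with
  | zero =>
    intro i hi
    have hlen : lenC ρ2 0 = 0 := by simp [lenC, h0]
    rw [hlen] at hi
    interval_cases i
    have hc : cSeq ρ2 0 0 = colC col M.qin := by
      rw [cSeq_zero, h0]
      rfl
    rw [hc, hlen]
    rw [er_zero, cmin_self]
    simp [colC, fC, h0]
    rfl
  | succ n ih =>
    have hS := hstep n
    -- target computation helpers
    have tgt_new : ∀ i, lenC ρ2 n < lenC ρ2 (n+1) - i →
        cmin (fC ρ2) (er (lenC ρ2) (n+1) (lenC ρ2 (n+1) - i)) (n+1) = fC ρ2 (n+1) := by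
      intro i hi
      rw [er_new hi (by omega), cmin_self]
    have tgt_old : ∀ i j, j ≤ lenC ρ2 n → lenC ρ2 n - j = lenC ρ2 (n+1) - i →
        lenC ρ2 (n+1) - i ≤ lenC ρ2 n →
        cmin (fC ρ2) (er (lenC ρ2) (n+1) (lenC ρ2 (n+1) - i)) (n+1)
          = min ((cSeq ρ2 n j).1) (fC ρ2 (n+1)) := by
      intro i j hj hij hle2
      rw [er_stable (by omega), ← hij,
        cmin_succ (er_le_self (show lenC ρ2 n - j ≤ lenC ρ2 n by omega)), ih j hj]
    rcases hstk : (ρ2 n).2 with _ | ⟨e, rest⟩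
    · -- empty stack at time n
      have hlenn : lenC ρ2 n = 0 := by simp [lenC, hstk]
      obtain ⟨qw, hqw, hlp⟩ := step_nil hstk hS
      obtain ⟨q', w⟩ := qw
      rcases w with _ | ⟨B, w'⟩
      · -- skip on empty stack
        simp only [liftPair] at hlp
        have hst1 : (ρ2 (n+1)).1.1 = q' := by rw [hlp]
        have hc' : (ρ2 (n+1)).1.2.1 = minC col ((ρ2 n).1.2.1) (colC col q') := by rw [hlp]
        have hs' : (ρ2 (n+1)).2 = [] := by rw [hlp]
        have hlen1 : lenC ρ2 (n+1) = 0 := by simp [lenC, hs']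
        have hfn1 : fC ρ2 (n+1) = col q' := by rw [fC, hst1]
        intro i hi
        rw [hlen1] at hi
        interval_cases i
        rw [cSeq_zero, hc', minC_val,
          tgt_old 0 0 (by omega) (by omega) (by omega), cSeq_zero, hfn1]
        rfl
      · -- push on empty stack
        simp only [liftPair] at hlp
        have hst1 : (ρ2 (n+1)).1.1 = q' := by rw [hlp]
        have hc' : (ρ2 (n+1)).1.2.1 = colC col q' := by rw [hlp]
        have hs' : (ρ2 (n+1)).2 = annot col (B :: w') none ((ρ2 n).1.2.1) := by rw [hlp]
        set k2 := w'.length with hk2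
        have hlen1 : lenC ρ2 (n+1) = k2 + 1 := by simp [lenC, hs', hk2]
        have hfn1 : fC ρ2 (n+1) = col q' := by rw [fC, hst1]
        have hann : ∀ j, j < k2 + 1 →
            annAt ρ2 (n+1) j = aval col (k2 + 1) none ((ρ2 n).1.2.1) j := by
          intro j hj
          rw [annAt, hs', annot_getElem? col _ _ _ (by simpa using hj)]
          rfl
        have hann_none : ∀ j, j < k2 → annAt ρ2 (n+1) j = none := by
          intro j hj
          rw [hann j (by omega), aval]
          simp only [Option.isSome_none, Bool.false_eq_true, and_false, if_false]
          rw [if_neg (by omega)]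
        have hann_c : annAt ρ2 (n+1) k2 = some ((ρ2 n).1.2.1) := by
          rw [hann k2 (by omega), aval, if_pos (by omega)]
          rfl
        have phase1 : ∀ i, i ≤ k2 → cSeq ρ2 (n+1) i = colC col q' := by
          intro i
          induction i with
          | zero => intro _; rw [cSeq_zero, hc']
          | succ i ihp =>
            intro hik
            rw [cSeq_succ, hann_none i (by omega), optMin_none, ihp (by omega)]
        intro i hi
        rw [hlen1] at hi
        rcases Nat.lt_or_ge i (k2 + 1) with hik | hik
        · rw [phase1 i (by omega), tgt_new i (by omega)]
          rw [hfn1]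
          rfl
        · have hieq : i = k2 + 1 := by omega
          subst hieq
          rw [cSeq_succ, hann_c, optMin_some, minC_val,
            tgt_old (k2+1) 0 (by omega) (by omega) (by omega), cSeq_zero,
            phase1 k2 (by omega), hfn1]
          rfl
    · -- nonempty stack at time n
      have hlenn : lenC ρ2 n = rest.length + 1 := by simp [lenC, hstk]
      obtain ⟨γ2, hγ2, hd2⟩ := step_cons hstk hS
      obtain ⟨qw, hqw, hlp⟩ := hγ2
      obtain ⟨q', w⟩ := qw
      have hann0 : annAt ρ2 n 0 = e.2 := by simp [annAt, hstk]
      have hannS : ∀ j, annAt ρ2 n (j+1) = Option.join ((rest[j]?).map Prod.snd) := by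
        intro j; simp [annAt, hstk]
      rcases w with _ | ⟨B, _ | ⟨B', w'⟩⟩
      · -- pop
        simp only [liftPair] at hlp
        have hst1 : (ρ2 (n+1)).1.1 = q' := by
          have := congrArg (fun p => p.1.1) hlp; exact this
        have hc' : (ρ2 (n+1)).1.2.1
            = optMin col e.2 (minC col ((ρ2 n).1.2.1) (colC col q')) := by
          have := congrArg (fun p => p.1.2.1) hlp; exact this
        have hγ : γ2 = [] := by
          have := congrArg (fun p => p.2) hlp; exact this
        have hs' : (ρ2 (n+1)).2 = rest := by rw [hd2, hγ]; rfl
        have hlen1 : lenC ρ2 (n+1) = rest.length := by simp [lenC, hs']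
        have hfn1 : fC ρ2 (n+1) = col q' := by rw [fC, hst1]
        have hannsh : ∀ j, annAt ρ2 (n+1) j = annAt ρ2 n (j+1) := by
          intro j
          rw [hannS j, annAt, hs']
        have phase : ∀ i, i ≤ rest.length →
            (cSeq ρ2 (n+1) i).1 = min ((cSeq ρ2 n (i+1)).1) (fC ρ2 (n+1)) := by
          intro i
          induction i with
          | zero =>
            intro _
            rw [cSeq_zero, hc', hfn1]
            rw [cSeq_succ, hann0]
            exact optMin_val_shift col e.2 (cSeq ρ2 n 0) _ (col q') (by rw [cSeq_zero]; rfl)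
          | succ i ihp =>
            intro hik
            rw [cSeq_succ, hannsh i]
            rw [cSeq_succ (n := n) (i := i + 1), hfn1]
            exact optMin_val_shift col _ _ _ (col q') (by rw [← hfn1]; exact ihp (by omega))
        intro i hi
        rw [hlen1] at hi
        rw [phase i hi, tgt_old i (i+1) (by omega) (by omega) (by omega)]
      · -- skip
        simp only [liftPair] at hlp
        have hst1 : (ρ2 (n+1)).1.1 = q' := by
          have := congrArg (fun p => p.1.1) hlp; exact this
        have hc' : (ρ2 (n+1)).1.2.1 = minC col ((ρ2 n).1.2.1) (colC col q') := by
          have := congrArg (fun p => p.1.2.1) hlp; exact this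
        have hγ : γ2 = [(B, e.2)] := by
          have := congrArg (fun p => p.2) hlp; exact this
        have hs' : (ρ2 (n+1)).2 = (B, e.2) :: rest := by rw [hd2, hγ]; rfl
        have hlen1 : lenC ρ2 (n+1) = rest.length + 1 := by simp [lenC, hs']
        have hfn1 : fC ρ2 (n+1) = col q' := by rw [fC, hst1]
        have hannsh : ∀ j, annAt ρ2 (n+1) j = annAt ρ2 n j := by
          intro j
          cases j with
          | zero => rw [hann0, annAt, hs']; simp
          | succ j => rw [hannS j, annAt, hs']; simp
        have phase : ∀ i, i ≤ rest.length + 1 →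
            (cSeq ρ2 (n+1) i).1 = min ((cSeq ρ2 n i).1) (fC ρ2 (n+1)) := by
          intro i
          induction i with
          | zero =>
            intro _
            rw [cSeq_zero, cSeq_zero, hc', hfn1]
            rfl
          | succ i ihp =>
            intro hik
            rw [cSeq_succ, hannsh i, cSeq_succ (n := n), hfn1]
            exact optMin_val_shift col _ _ _ (col q') (by rw [← hfn1]; exact ihp (by omega))
        intro i hi
        rw [hlen1] at hi
        rw [phase i hi, tgt_old i i (by omega) (by omega) (by omega)]
      · -- push
        simp only [liftPair] at hlp
        have hst1 : (ρ2 (n+1)).1.1 = q' := by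
          have := congrArg (fun p => p.1.1) hlp; exact this
        have hc' : (ρ2 (n+1)).1.2.1 = colC col q' := by
          have := congrArg (fun p => p.1.2.1) hlp; exact this
        have hγ : γ2 = annot col (B :: B' :: w') (some e.2) ((ρ2 n).1.2.1) := by
          have := congrArg (fun p => p.2) hlp; exact this
        have hs' : (ρ2 (n+1)).2
            = annot col (B :: B' :: w') (some e.2) ((ρ2 n).1.2.1) ++ rest := by
          rw [hd2, hγ]
        set k2 := w'.length with hk2
        have hlenw : (B :: B' :: w').length = k2 + 2 := by simp [hk2]
        have hlen1 : lenC ρ2 (n+1) = k2 + 2 + rest.length := by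
          simp [lenC, hs']
          try omega
        have hfn1 : fC ρ2 (n+1) = col q' := by rw [fC, hst1]
        have hann : ∀ j, j < k2 + 2 →
            annAt ρ2 (n+1) j = aval col (k2 + 2) (some e.2) ((ρ2 n).1.2.1) j := by
          intro j hj
          rw [annAt, hs', List.getElem?_append_left (by simp [annot_length]; omega),
            annot_ann col _ _ _ (by simp; omega), hlenw]
        have hann_none : ∀ j, j < k2 → annAt ρ2 (n+1) j = none := by
          intro j hj
          rw [hann j (by omega), aval, if_neg (by omega), if_neg (by omega)]
        have hann_c : annAt ρ2 (n+1) k2 = some ((ρ2 n).1.2.1) := by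
          rw [hann k2 (by omega), aval, if_neg (by omega), if_pos (by simp)]
        have hann_e : annAt ρ2 (n+1) (k2 + 1) = e.2 := by
          rw [hann (k2+1) (by omega), aval, if_pos (show k2+1+1 = k2+2 by omega)]
          rfl
        have hannsh : ∀ j, 1 ≤ j → annAt ρ2 (n+1) (k2 + 1 + j) = annAt ρ2 n j := by
          intro j hj
          obtain ⟨j', rfl⟩ : ∃ j', j = j' + 1 := ⟨j - 1, by omega⟩
          have hidx : k2 + 1 + (j' + 1) - (annot col (B :: B' :: w') (some e.2) ((ρ2 n).1.2.1)).length = j' := by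
            rw [annot_length]
            simp only [List.length_cons]
            omega
          rw [hannS j', annAt, hs',
            List.getElem?_append_right (by rw [annot_length]; simp only [List.length_cons]; omega), hidx]
        have phase1 : ∀ i, i ≤ k2 → cSeq ρ2 (n+1) i = colC col q' := by
          intro i
          induction i with
          | zero => intro _; rw [cSeq_zero, hc']
          | succ i ihp =>
            intro hik
            rw [cSeq_succ, hann_none i (by omega), optMin_none, ihp (by omega)]
        have phase2 : ∀ j, j ≤ rest.length + 1 →
            (cSeq ρ2 (n+1) (k2 + 1 + j)).1 = min ((cSeq ρ2 n j).1) (fC ρ2 (n+1)) := by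
          intro j
          induction j with
          | zero =>
            intro _
            show (cSeq ρ2 (n+1) (k2 + 1)).1 = _
            rw [cSeq_succ, hann_c, optMin_some, minC_val, phase1 k2 (by omega),
              cSeq_zero, hfn1]
            rfl
          | succ j ihp =>
            intro hik
            have hidx : k2 + 1 + (j + 1) = (k2 + 1 + j) + 1 := by omega
            rw [hidx, cSeq_succ]
            have hannj : annAt ρ2 (n+1) (k2 + 1 + j) = annAt ρ2 n j := by
              cases j with
              | zero => rw [hann_e, hann0]
              | succ j' => exact hannsh (j' + 1) (by omega)
            rw [hannj, cSeq_succ (n := n), hfn1]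
            exact optMin_val_shift col _ _ _ (col q') (by rw [← hfn1]; exact ihp (by omega))
        intro i hi
        rw [hlen1] at hi
        rcases Nat.lt_or_ge i (k2 + 1) with hik | hik
        · rw [phase1 i (by omega), tgt_new i (by omega), hfn1]
          rfl
        · obtain ⟨j, rfl⟩ : ∃ j, i = k2 + 1 + j := ⟨i - (k2 + 1), by omega⟩
          rw [phase2 j (by omega), tgt_old (k2 + 1 + j) j (by omega) (by omega) (by omega)]

end Invariant

end StairC
namespace StairC

open PDM StairH

section Invariant2

variable {Q A Γ : Type} {M : PDM Q A Γ} {col : Q → ℕ}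
variable {ρ2 : ℕ → Conf (Q2 (Q := Q) col) (G2 (Γ := Γ) col)} {u : ℕ → Option A}
variable (h0 : ρ2 0 = ((M2 M col).qin, []))
variable (hstep : ∀ n, (M2 M col).Step (ρ2 n) (u n) (ρ2 (n + 1)))

include h0 hstep

theorem stairs (n' : ℕ) (hn1 : ∀ m, n' ≤ m → lenC ρ2 n' ≤ lenC ρ2 m) :
    ∃ a, a ≤ n' ∧ col2 col ((ρ2 n').1) = cmin (fC ρ2) a n' ∧
      (∀ k, a ≤ k → k < n' → ¬ (∀ m, k ≤ m → lenC ρ2 k ≤ lenC ρ2 m)) ∧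
      (a = 0 ∨ ∀ m, a - 1 ≤ m → lenC ρ2 (a - 1) ≤ lenC ρ2 m) := by
  have hlen0 : lenC ρ2 0 = 0 := by simp [lenC, h0]
  cases n' with
  | zero =>
    refine ⟨0, le_rfl, ?_, by omega, Or.inl rfl⟩
    have : col2 col ((ρ2 0).1) = col M.qin := by rw [h0]; rfl
    rw [this, cmin_self]
    simp [fC, h0]
    rfl
  | succ n =>
    have hS := hstep n
    -- common finisher for the push/skip shapes
    have finish_ps : ∀ q' : Q, (ρ2 (n+1)).1.1 = q' → (ρ2 (n+1)).1.2.2 = colC col q' →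
        lenC ρ2 n ≤ lenC ρ2 (n+1) →
        ∃ a, a ≤ n + 1 ∧ col2 col ((ρ2 (n+1)).1) = cmin (fC ρ2) a (n+1) ∧
          (∀ k, a ≤ k → k < n + 1 → ¬ (∀ m, k ≤ m → lenC ρ2 k ≤ lenC ρ2 m)) ∧
          (a = 0 ∨ ∀ m, a - 1 ≤ m → lenC ρ2 (a - 1) ≤ lenC ρ2 m) := by
      intro q' hst1 hv' hle
      refine ⟨n + 1, le_rfl, ?_, by omega, Or.inr ?_⟩
      · rw [cmin_self]
        show (ρ2 (n+1)).1.2.2.1 = fC ρ2 (n+1)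
        rw [hv', fC, hst1]
        rfl
      · intro m hm
        simp only [Nat.add_sub_cancel] at hm ⊢
        rcases Nat.lt_or_ge m (n+1) with h1 | h1
        · have : m = n := by omega
          rw [this]
        · exact le_trans hle (hn1 m h1)
    rcases hstk : (ρ2 n).2 with _ | ⟨e, rest⟩
    · -- empty stack at time n : skip or push
      obtain ⟨qw, hqw, hlp⟩ := step_nil hstk hS
      obtain ⟨q', w⟩ := qw
      rcases w with _ | ⟨B, w'⟩
      · simp only [liftPair] at hlp
        exact finish_ps q' (by rw [hlp]) (by rw [hlp]) (by
          simp [lenC, hstk])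
      · simp only [liftPair] at hlp
        exact finish_ps q' (by rw [hlp]) (by rw [hlp]) (by
          simp [lenC, hstk])
    · have hlenn : lenC ρ2 n = rest.length + 1 := by simp [lenC, hstk]
      obtain ⟨γ2, hγ2, hd2⟩ := step_cons hstk hS
      obtain ⟨qw, hqw, hlp⟩ := hγ2
      obtain ⟨q', w⟩ := qw
      rcases w with _ | ⟨B, _ | ⟨B', w'⟩⟩
      · -- pop
        simp only [liftPair] at hlp
        have hst1 : (ρ2 (n+1)).1.1 = q' := by
          have := congrArg (fun p => p.1.1) hlp; exact this
        have hv' : (ρ2 (n+1)).1.2.2 = minC col ((ρ2 n).1.2.1) (colC col q') := by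
          have := congrArg (fun p => p.1.2.2) hlp; exact this
        have hγ : γ2 = [] := by
          have := congrArg (fun p => p.2) hlp; exact this
        have hs' : (ρ2 (n+1)).2 = rest := by rw [hd2, hγ]; rfl
        have hlen1 : lenC ρ2 (n+1) = rest.length := by simp [lenC, hs']
        have hfn1 : fC ρ2 (n+1) = col q' := by rw [fC, hst1]
        set a := er (lenC ρ2) n (lenC ρ2 n) with ha
        have haInf : sInf {m | ∀ k, m ≤ k → k ≤ n → lenC ρ2 n ≤ lenC ρ2 k} = a := rfl
        have haspec := er_spec (lenC ρ2) n (lenC ρ2 n)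
        have halen : a ≤ n := er_le_self le_rfl
        have hapos : 1 ≤ a := by
          by_contra hc
          push_neg at hc
          have := haspec 0 (by omega) (by omega)
          omega
        have hfa : lenC ρ2 (a - 1) < lenC ρ2 n := by
          have hnm : a - 1 ∉ {m | ∀ k, m ≤ k → k ≤ n → lenC ρ2 n ≤ lenC ρ2 k} :=
            Nat.notMem_of_lt_sInf (by rw [haInf]; omega)
          simp only [Set.mem_setOf_eq] at hnm
          push_neg at hnm
          obtain ⟨k, hk1, hk2, hk3⟩ := hnm
          rcases Nat.lt_or_ge k a with h1 | h1
          · have hke : k = a - 1 := by omega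
            rw [← hke]
            exact hk3
          · exact absurd (haspec k h1 hk2) (by omega)
        refine ⟨a, by omega, ?_, ?_, Or.inr ?_⟩
        · show (ρ2 (n+1)).1.2.2.1 = _
          have hinv := inv h0 hstep n 0 (by omega)
          rw [cSeq_zero] at hinv
          simp only [Nat.sub_zero] at hinv
          rw [hv', minC_val, hinv, ← ha, cmin_succ (show a ≤ n from halen)]
          congr 1
          rw [fC, hst1]
          rfl
        · intro k hk1 hk2 hall
          have h1 := haspec k hk1 (by omega)
          have h2 := hall (n+1) (by omega)
          omega
        · intro m hm
          rcases Nat.lt_or_ge m a with h1 | h1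
          · have : m = a - 1 := by omega
            rw [this]
          · rcases Nat.lt_or_ge m (n+1) with h2 | h2
            · have := haspec m h1 (by omega)
              omega
            · have := hn1 m h2
              omega
      · -- skip
        simp only [liftPair] at hlp
        exact finish_ps q' (by have := congrArg (fun p => p.1.1) hlp; exact this)
          (by have := congrArg (fun p => p.1.2.2) hlp; exact this)
          (by
            have hγ : γ2 = [(B, e.2)] := by
              have := congrArg (fun p => p.2) hlp; exact this
            have hs' : (ρ2 (n+1)).2 = (B, e.2) :: rest := by rw [hd2, hγ]; rfl
            simp [lenC, hs', hstk])
      · -- push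
        simp only [liftPair] at hlp
        exact finish_ps q' (by have := congrArg (fun p => p.1.1) hlp; exact this)
          (by have := congrArg (fun p => p.1.2.2) hlp; exact this)
          (by
            have hγ : γ2 = annot col (B :: B' :: w') (some e.2) ((ρ2 n).1.2.1) := by
              have := congrArg (fun p => p.2) hlp; exact this
            have hs' : (ρ2 (n+1)).2 = annot col (B :: B' :: w') (some e.2) ((ρ2 n).1.2.1) ++ rest := by
              rw [hd2, hγ]
            simp [lenC, hs', hstk])

end Invariant2

end StairC

namespace StairC

open PDM StairH

section Master

variable {Q A Γ : Type} {M : PDM Q A Γ} {col : Q → ℕ}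

lemma finite_CT [Finite Q] : Finite (CT col) := by
  have h : Set.Finite (Set.range col) := Set.finite_range col
  exact h.to_subtype

lemma steps_mem_iff (ρ2 : ℕ → Conf (Q2 (Q := Q) col) (G2 (Γ := Γ) col)) (n : ℕ) :
    n ∈ StepsSet ρ2 ↔ ∀ m, n ≤ m → lenC ρ2 n ≤ lenC ρ2 m := by
  constructor
  · intro h m hm
    have := h m hm
    simp only [sh, lenC] at this ⊢
    omega
  · intro h m hm
    have := h m hm
    simp only [sh, lenC] at this ⊢
    omega

variable {ρ2 : ℕ → Conf (Q2 (Q := Q) col) (G2 (Γ := Γ) col)} {u : ℕ → Option A}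

theorem master [Finite Q] (h0 : ρ2 0 = ((M2 M col).qin, []))
    (hstep : ∀ n, (M2 M col).Step (ρ2 n) (u n) (ρ2 (n + 1)))
    (ρM : ℕ → Conf Q Γ) (hmatch : ∀ n, (ρM n).1 = (ρ2 n).1.1) :
    sInf (col2 col '' InfOccStair ρ2) = sInf (col '' InfOcc ρM) := by
  haveI : Finite (CT col) := finite_CT
  -- bound on colors
  obtain ⟨B, hB⟩ := Set.Finite.bddAbove (Set.finite_range col)
  have hbd : ∀ n, fC ρ2 n ≤ B := fun n => hB ⟨(ρ2 n).1.1, rfl⟩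
  have hTcof : ∀ N, ∃ n, N ≤ n ∧ n ∈ StepsSet ρ2 := by
    intro N
    obtain ⟨n, hn1, hn2⟩ := steps_cofinal (lenC ρ2) N
    exact ⟨n, hn1, (steps_mem_iff ρ2 n).2 hn2⟩
  have A1 : col2 col '' InfOccStair ρ2
      = {z | ∀ N, ∃ n, N ≤ n ∧ n ∈ StepsSet ρ2 ∧ col2 col ((ρ2 n).1) = z} := by
    ext z
    constructor
    · rintro ⟨s, hs, rfl⟩
      intro N
      obtain ⟨m, hm1, hm2, hm3⟩ := hs N
      exact ⟨m, hm1, hm2, by rw [hm3]⟩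
    · intro hz
      obtain ⟨i, hi⟩ := pig (ι := Q2 (Q := Q) col)
        (fun i n => n ∈ StepsSet ρ2 ∧ (ρ2 n).1 = i ∧ col2 col i = z)
        (fun N => by
          obtain ⟨n, h1, h2, h3⟩ := hz N
          exact ⟨n, h1, (ρ2 n).1, h2, rfl, h3⟩)
      refine ⟨i, fun n => ?_, ?_⟩
      · obtain ⟨m, hm, hP⟩ := hi n
        exact ⟨m, hm, hP.1, hP.2.1⟩
      · obtain ⟨m, _, hP⟩ := hi 0
        exact hP.2.2
  have A2 : col '' InfOcc ρM = {y | ∀ N, ∃ n, N ≤ n ∧ fC ρ2 n = y} := by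
    ext y
    constructor
    · rintro ⟨q, hq, rfl⟩
      intro N
      obtain ⟨m, hm1, hm2⟩ := hq N
      exact ⟨m, hm1, by rw [fC, ← hmatch m, hm2]⟩
    · intro hy
      obtain ⟨i, hi⟩ := pig (ι := Q)
        (fun i n => (ρM n).1 = i ∧ col i = y)
        (fun N => by
          obtain ⟨n, h1, h2⟩ := hy N
          exact ⟨n, h1, (ρM n).1, rfl, by rw [← h2, fC, hmatch n]⟩)
      refine ⟨i, fun n => ?_, ?_⟩
      · obtain ⟨m, hm, hP⟩ := hi n
        exact ⟨m, hm, hP.1⟩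
      · obtain ⟨m, _, hP⟩ := hi 0
        exact hP.2
  rw [A1, A2]
  apply comb (fC ρ2) B hbd (StepsSet ρ2) hTcof
  intro n hn
  obtain ⟨a, ha1, ha2, ha3, ha4⟩ := stairs h0 hstep n ((steps_mem_iff ρ2 n).1 hn)
  refine ⟨a, ha1, ha2, fun k hk1 hk2 hkT => ha3 k hk1 hk2 ((steps_mem_iff ρ2 k).1 hkT), ?_⟩
  rcases ha4 with h | h
  · exact Or.inl h
  · exact Or.inr ((steps_mem_iff ρ2 (a - 1)).2 h)

/-- Lifting a run of `M` to a run of the stair machine. -/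
lemma liftRun (ρ : ℕ → Conf Q Γ) (v : ℕ → Option A)
    (h0r : ρ 0 = (M.qin, [])) (hsteps : ∀ n, M.Step (ρ n) (v n) (ρ (n + 1))) :
    ∃ ρ2 : ℕ → Conf (Q2 (Q := Q) col) (G2 (Γ := Γ) col),
      ρ2 0 = ((M2 M col).qin, []) ∧
      (∀ n, (M2 M col).Step (ρ2 n) (v n) (ρ2 (n + 1))) ∧
      ∀ n, (ρ2 n).1.1 = (ρ n).1 := by
  let ρ2 : ℕ → Conf (Q2 (Q := Q) col) (G2 (Γ := Γ) col) :=
    fun n => Nat.rec ((M2 M col).qin, ([] : List (G2 (Γ := Γ) col)))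
      (fun m ih => nextConf col ih (ρ (m + 1))) n
  have hsim : ∀ n, (ρ2 n).1.1 = (ρ n).1 ∧ (ρ2 n).2.map Prod.fst = (ρ n).2 := by
    intro n
    induction n with
    | zero =>
      constructor
      · show (M2 M col).qin.1 = (ρ 0).1
        rw [h0r]
        rfl
      · show List.map Prod.fst ([] : List (G2 (Γ := Γ) col)) = (ρ 0).2
        rw [h0r]
        rfl
    | succ n ihs =>
      exact (lift_step M col ihs.1 ihs.2 (hsteps n)).2
  exact ⟨ρ2, rfl, fun n => (lift_step M col (hsim n).1 (hsim n).2 (hsteps n)).1,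
    fun n => (hsim n).1⟩

theorem lang_eq [Finite Q] :
    PDM.StairParityLang (M2 M col) (col2 col) = PDM.ParityLang M col := by
  ext α
  constructor
  · rintro ⟨ρ2, ⟨h02, v, hv, φ, hφ1, hφ2, hφ3⟩, hacc⟩
    refine ⟨fun n => projC col (ρ2 n), ⟨?_, v, fun n => step_proj M col (hv n), φ, hφ1, hφ2, hφ3⟩, ?_⟩
    · show projC col (ρ2 0) = (M.qin, [])
      rw [h02]
      rfl
    · show Even (sInf (col '' InfOcc fun n => projC col (ρ2 n)))
      rw [← master h02 hv (fun n => projC col (ρ2 n)) (fun n => rfl)]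
      exact hacc
  · rintro ⟨ρ, ⟨h0r, v, hv, φ, hφ1, hφ2, hφ3⟩, hacc⟩
    obtain ⟨ρ2, h02, hst2, hsim⟩ := liftRun ρ v h0r hv
    refine ⟨ρ2, ⟨h02, v, hst2, φ, hφ1, hφ2, hφ3⟩, ?_⟩
    show Even (sInf (col2 col '' InfOccStair ρ2))
    rw [master h02 hst2 ρ (fun n => (hsim n).symm)]
    exact hacc

end Master

end StairC


/-- For every deterministic parity pushdown automaton there is a
deterministic stair parity pushdown automaton recognizing the same ω-language;
consequently `DCFL_ω ⊆ StDCFL_ω`. -/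
theorem parity_dpda_to_stair_parity_dpda :
    (∀ (Q A Γ : Type), Finite Q → Finite A → Finite Γ →
      ∀ M : PDM Q A Γ, M.Deterministic → ∀ col : Q → ℕ,
        ∃ (Q' Γ' : Type) (_ : Finite Q') (_ : Finite Γ')
          (M' : PDM Q' A Γ') (col' : Q' → ℕ),
          M'.Deterministic ∧ PDM.StairParityLang M' col' = PDM.ParityLang M col) ∧
    (∀ (A : Type), Finite A → ∀ L : Set (ℕ → A), InDCFLomega L → InStDCFLomega L) := by
  have main : ∀ (Q A Γ : Type), Finite Q → Finite A → Finite Γ →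
      ∀ M : PDM Q A Γ, M.Deterministic → ∀ col : Q → ℕ,
        ∃ (Q' Γ' : Type) (_ : Finite Q') (_ : Finite Γ')
          (M' : PDM Q' A Γ') (col' : Q' → ℕ),
          M'.Deterministic ∧ PDM.StairParityLang M' col' = PDM.ParityLang M col := by
    intro Q A Γ hQ hA hΓ M hdet col
    haveI := hQ
    haveI := hA
    haveI := hΓ
    haveI : Finite (StairC.CT col) := StairC.finite_CT
    haveI : Finite (StairC.Q2 (Q := Q) col) := by unfold StairC.Q2; infer_instance
    haveI : Finite (StairC.G2 (Γ := Γ) col) := by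
      unfold StairC.G2
      haveI : Fintype Γ := Fintype.ofFinite _
      haveI : Fintype (StairC.CT col) := Fintype.ofFinite _
      infer_instance
    exact ⟨StairC.Q2 (Q := Q) col, StairC.G2 (Γ := Γ) col, inferInstance, inferInstance,
      StairC.M2 M col, StairC.col2 col, StairC.M2_det M col hdet, StairC.lang_eq⟩
  refine ⟨main, ?_⟩
  intro A hA L hL
  obtain ⟨Q, Γ, hQ, hΓ, M, col, hdet, hlang⟩ := hL
  obtain ⟨Q', Γ', hQ', hΓ', M', col', hdet', hlang'⟩ := main Q A Γ hQ hA hΓ M hdet col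
  exact ⟨Q', Γ', hQ', hΓ', M', col', hdet', by rw [hlang', hlang]⟩
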